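/- (Discrete-time contraction/Demidovich condition implies local exponential incremental stability.) Suppose there exist a sequence of symmetric matrices P(k) ∈ ℝ^{n×n}, constants 0 < p ≤ P̄ with p·I ⪯ P(k) ⪯ P̄·I for all k, and ρ ∈ (0,1), such that for all x ∈ D̃₀ and all k the matrix (∂f/∂x)(k,x)ᵀ P(k+1) (∂f/∂x)(k,x) − ρ² P(k) is negative definite. Then there exist r > 0 with the closed ball B(r) (centered at the origin) contained in D̃₀, and a constant d' > 0, such that for every k₀ and any two solutions x, y of x_{k+1} = f(k, x_k) with x_{k₀}, y_{k₀} ∈ B(r), one has x_k, y_k ∈ D̃₀ for all k ≥ k₀ and ‖x_k − y_k‖ ≤ d' ρ^{k−k₀} ‖x_{k₀} − y_{k₀}‖ for all k ≥ k₀. -/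

import Mathlib

open Matrix

noncomputable def Matrix.PosSemidef.sqrt {n : ℕ} {A : Matrix (Fin n) (Fin n) ℝ}
    (_hA : A.PosSemidef) : Matrix (Fin n) (Fin n) ℝ :=
  open scoped MatrixOrder in CFC.sqrt A

lemma Matrix.PosSemidef.sqrt_mul_self {n : ℕ} {A : Matrix (Fin n) (Fin n) ℝ}
    (hA : A.PosSemidef) : hA.sqrt * hA.sqrt = A := by
  open scoped MatrixOrder in exact CFC.sqrt_mul_sqrt_self A hA.nonneg

lemma Matrix.PosSemidef.posSemidef_sqrt {n : ℕ} {A : Matrix (Fin n) (Fin n) ℝ}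
    (hA : A.PosSemidef) : hA.sqrt.PosSemidef := by
  open scoped MatrixOrder in exact (CFC.sqrt_nonneg A).posSemidef

lemma euclid_normsq (n : ℕ) (u : EuclideanSpace ℝ (Fin n)) :
    ‖u‖ ^ 2 = (WithLp.equiv 2 _ u) ⬝ᵥ (WithLp.equiv 2 _ u) := by
  rw [EuclideanSpace.norm_eq, Real.sq_sqrt (by positivity)]
  simp [dotProduct, sq]

lemma clm_apply_eq (n : ℕ) (M : Matrix (Fin n) (Fin n) ℝ) (u : EuclideanSpace ℝ (Fin n)) :
    WithLp.equiv 2 _ (Matrix.toEuclideanCLM (𝕜 := ℝ) M u) = M *ᵥ (WithLp.equiv 2 _ u) := by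
  simp [Matrix.ofLp_toEuclideanCLM, Matrix.toLin'_apply]

lemma symm_dot (n : ℕ) (S : Matrix (Fin n) (Fin n) ℝ) (hS : Sᵀ = S) (v w : Fin n → ℝ) :
    v ⬝ᵥ (S *ᵥ w) = (S *ᵥ v) ⬝ᵥ w := by
  rw [Matrix.dotProduct_mulVec]
  congr 1
  rw [← hS, Matrix.vecMul_transpose, hS]

lemma quad_id (n : ℕ) (Pm : Matrix (Fin n) (Fin n) ℝ) (hPm : Pm.PosSemidef)
    (u : EuclideanSpace ℝ (Fin n)) :
    ‖Matrix.toEuclideanCLM (𝕜 := ℝ) hPm.sqrt u‖ ^ 2 =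
      (WithLp.equiv 2 _ u) ⬝ᵥ (Pm *ᵥ (WithLp.equiv 2 _ u)) := by
  set v := WithLp.equiv 2 _ u with hv
  rw [euclid_normsq, clm_apply_eq, ← hv]
  conv_rhs => rw [← hPm.sqrt_mul_self, ← Matrix.mulVec_mulVec]
  exact (symm_dot n _ hPm.posSemidef_sqrt.1 v _).symm

lemma weighted_low (n : ℕ) {Pm : Matrix (Fin n) (Fin n) ℝ} (hPm : Pm.PosDef) {c : ℝ}
    (hc : 0 ≤ c) (low : (Pm - c • (1 : Matrix (Fin n) (Fin n) ℝ)).PosSemidef)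
    (u : EuclideanSpace ℝ (Fin n)) :
    Real.sqrt c * ‖u‖ ≤ ‖Matrix.toEuclideanCLM (𝕜 := ℝ) hPm.posSemidef.sqrt u‖ := by
  have h := low.dotProduct_mulVec_nonneg (WithLp.equiv 2 _ u)
  simp only [star_trivial, Matrix.sub_mulVec, dotProduct_sub, Matrix.smul_mulVec,
    Matrix.one_mulVec, dotProduct_smul, smul_eq_mul] at h
  have hsq : c * ‖u‖ ^ 2 ≤ ‖Matrix.toEuclideanCLM (𝕜 := ℝ) hPm.posSemidef.sqrt u‖ ^ 2 := by
    rw [quad_id, euclid_normsq]; linarith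
  have h1 := Real.sqrt_le_sqrt hsq
  rwa [Real.sqrt_mul hc, Real.sqrt_sq (norm_nonneg _), Real.sqrt_sq (norm_nonneg _)] at h1

lemma weighted_high (n : ℕ) {Pm : Matrix (Fin n) (Fin n) ℝ} (hPm : Pm.PosDef) {c : ℝ}
    (hc : 0 ≤ c) (high : (c • (1 : Matrix (Fin n) (Fin n) ℝ) - Pm).PosSemidef)
    (u : EuclideanSpace ℝ (Fin n)) :
    ‖Matrix.toEuclideanCLM (𝕜 := ℝ) hPm.posSemidef.sqrt u‖ ≤ Real.sqrt c * ‖u‖ := by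
  have h := high.dotProduct_mulVec_nonneg (WithLp.equiv 2 _ u)
  simp only [star_trivial, Matrix.sub_mulVec, dotProduct_sub, Matrix.smul_mulVec,
    Matrix.one_mulVec, dotProduct_smul, smul_eq_mul] at h
  have hsq : ‖Matrix.toEuclideanCLM (𝕜 := ℝ) hPm.posSemidef.sqrt u‖ ^ 2 ≤ c * ‖u‖ ^ 2 := by
    rw [quad_id, euclid_normsq]; linarith
  have h1 := Real.sqrt_le_sqrt hsq
  rwa [Real.sqrt_mul hc, Real.sqrt_sq (norm_nonneg _), Real.sqrt_sq (norm_nonneg _)] at h1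

lemma step_contraction (n : ℕ) (D₀ : Set (EuclideanSpace ℝ (Fin n)))
    (f : EuclideanSpace ℝ (Fin n) → EuclideanSpace ℝ (Fin n))
    (A : EuclideanSpace ℝ (Fin n) → Matrix (Fin n) (Fin n) ℝ)
    (P₁ P₂ : Matrix (Fin n) (Fin n) ℝ) (hP₁ : P₁.PosDef) (hP₂ : P₂.PosDef)
    (ρ : ℝ) (hρ0 : 0 ≤ ρ)
    (hJ : ∀ x ∈ D₀, HasFDerivAt f (Matrix.toEuclideanCLM (𝕜 := ℝ) (A x)) x)
    (hDemi : ∀ x ∈ D₀, ∀ v : Fin n → ℝ,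
      (A x *ᵥ v) ⬝ᵥ (P₂ *ᵥ (A x *ᵥ v)) ≤ ρ ^ 2 * (v ⬝ᵥ (P₁ *ᵥ v)))
    (s : Set (EuclideanSpace ℝ (Fin n))) (hconv : Convex ℝ s) (hsub : s ⊆ D₀)
    (a b : EuclideanSpace ℝ (Fin n)) (ha : a ∈ s) (hb : b ∈ s) :
    ‖Matrix.toEuclideanCLM (𝕜 := ℝ) hP₂.posSemidef.sqrt (f a - f b)‖ ≤
      ρ * ‖Matrix.toEuclideanCLM (𝕜 := ℝ) hP₁.posSemidef.sqrt (a - b)‖ := by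
  set S₁ := hP₁.posSemidef.sqrt with hS₁def
  set S₂ := hP₂.posSemidef.sqrt with hS₂def
  have hS₁det : S₁.det ≠ 0 := by
    intro h
    have : S₁ * S₁ = P₁ := hP₁.posSemidef.sqrt_mul_self
    have hd : P₁.det = 0 := by rw [← this, Matrix.det_mul, h, mul_zero]
    exact hP₁.det_pos.ne' hd
  set T := S₁⁻¹ with hTdef
  have hST : S₁ * T = 1 := Matrix.mul_nonsing_inv _ (isUnit_iff_ne_zero.mpr hS₁det)
  have hTS : T * S₁ = 1 := Matrix.nonsing_inv_mul _ (isUnit_iff_ne_zero.mpr hS₁det)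
  set Sc₁ := Matrix.toEuclideanCLM (𝕜 := ℝ) S₁ with hSc₁
  set Sc₂ := Matrix.toEuclideanCLM (𝕜 := ℝ) S₂ with hSc₂
  set Tc := Matrix.toEuclideanCLM (𝕜 := ℝ) T with hTc
  have hTcSc : ∀ u, Tc (Sc₁ u) = u := by
    intro u
    have h1 : Tc (Sc₁ u) = Matrix.toEuclideanCLM (𝕜 := ℝ) (T * S₁) u := by
      rw [_root_.map_mul]; rfl
    rw [h1, hTS, _root_.map_one]; rfl
  have hScTc : ∀ u, Sc₁ (Tc u) = u := by
    intro u
    have h1 : Sc₁ (Tc u) = Matrix.toEuclideanCLM (𝕜 := ℝ) (S₁ * T) u := by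
      rw [_root_.map_mul]; rfl
    rw [h1, hST, _root_.map_one]; rfl
  set s' : Set (EuclideanSpace ℝ (Fin n)) := Sc₁ '' s with hs'
  have hconv' : Convex ℝ s' := hconv.is_linear_image ⟨fun a b => map_add _ a b,
    fun c a => map_smul _ c a⟩
  set g : EuclideanSpace ℝ (Fin n) → EuclideanSpace ℝ (Fin n) :=
    fun w => Sc₂ (f (Tc w)) with hg
  set g' : EuclideanSpace ℝ (Fin n) →
      (EuclideanSpace ℝ (Fin n) →L[ℝ] EuclideanSpace ℝ (Fin n)) :=
    fun w => (Sc₂.comp ((Matrix.toEuclideanCLM (𝕜 := ℝ) (A (Tc w))).comp Tc)) with hg'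
  have hder : ∀ w ∈ s', HasFDerivWithinAt g (g' w) s' w := by
    rintro w ⟨z, hz, rfl⟩
    have hz₀ : z ∈ D₀ := hsub hz
    have h3 : HasFDerivAt (fun u : EuclideanSpace ℝ (Fin n) => Tc u) Tc (Sc₁ z) :=
      Tc.hasFDerivAt
    have h2 : HasFDerivAt f (Matrix.toEuclideanCLM (𝕜 := ℝ) (A z)) (Tc (Sc₁ z)) := by
      rw [hTcSc]; exact hJ z hz₀
    have h1 : HasFDerivAt (fun w => f (Tc w))
        ((Matrix.toEuclideanCLM (𝕜 := ℝ) (A z)).comp Tc) (Sc₁ z) := h2.comp _ h3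
    have h4 : HasFDerivAt g
        (Sc₂.comp ((Matrix.toEuclideanCLM (𝕜 := ℝ) (A z)).comp Tc)) (Sc₁ z) :=
      (Sc₂.hasFDerivAt).comp _ h1
    have h5 : g' (Sc₁ z) = Sc₂.comp ((Matrix.toEuclideanCLM (𝕜 := ℝ) (A z)).comp Tc) := by
      rw [hg']; simp only [hTcSc]
    rw [h5]
    exact h4.hasFDerivWithinAt
  have hbound : ∀ w ∈ s', ‖g' w‖ ≤ ρ := by
    rintro w ⟨z, hz, rfl⟩
    have hz₀ : z ∈ D₀ := hsub hz
    refine ContinuousLinearMap.opNorm_le_bound _ hρ0 fun u => ?_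
    have happ : g' (Sc₁ z) u = Sc₂ (Matrix.toEuclideanCLM (𝕜 := ℝ) (A z) (Tc u)) := by
      rw [hg']; simp only [hTcSc]; rfl
    rw [happ]
    set v : Fin n → ℝ := WithLp.equiv 2 _ (Tc u) with hvdef
    have q2 : ‖Sc₂ (Matrix.toEuclideanCLM (𝕜 := ℝ) (A z) (Tc u))‖ ^ 2 =
        (A z *ᵥ v) ⬝ᵥ (P₂ *ᵥ (A z *ᵥ v)) := by
      rw [hSc₂, quad_id, clm_apply_eq]
    have q1 : ‖Sc₁ (Tc u)‖ ^ 2 = v ⬝ᵥ (P₁ *ᵥ v) := by rw [hSc₁, quad_id]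
    have hsq : ‖Sc₂ (Matrix.toEuclideanCLM (𝕜 := ℝ) (A z) (Tc u))‖ ^ 2 ≤
        ρ ^ 2 * ‖u‖ ^ 2 := by
      rw [q2]
      refine (hDemi z hz₀ v).trans ?_
      rw [← q1, hScTc]
    have h1 := Real.sqrt_le_sqrt hsq
    rwa [Real.sqrt_sq (norm_nonneg _), Real.sqrt_mul (sq_nonneg ρ), Real.sqrt_sq hρ0,
      Real.sqrt_sq (norm_nonneg _)] at h1
  have key := Convex.norm_image_sub_le_of_norm_hasFDerivWithin_le hder hbound hconv'
    ⟨b, hb, rfl⟩ ⟨a, ha, rfl⟩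
  have e1 : g (Sc₁ a) = Sc₂ (f a) := by rw [hg]; simp only [hTcSc]
  have e2 : g (Sc₁ b) = Sc₂ (f b) := by rw [hg]; simp only [hTcSc]
  rw [e1, e2, ← map_sub, ← map_sub] at key
  exact key

/-- Discrete-time contraction (Demidovich) condition implies local uniform
exponential incremental stability (Theorem 5). -/
theorem demidovich_implies_local_eis
    (n : ℕ) (D D₀ : Set (EuclideanSpace ℝ (Fin n)))
    (f : ℕ → EuclideanSpace ℝ (Fin n) → EuclideanSpace ℝ (Fin n))
    (A : ℕ → EuclideanSpace ℝ (Fin n) → Matrix (Fin n) (Fin n) ℝ)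
    (P : ℕ → Matrix (Fin n) (Fin n) ℝ)
    (p Pbar Abar LJ ρ : ℝ)
    (hD : IsCompact D) (h0D : (0 : EuclideanSpace ℝ (Fin n)) ∈ D)
    (hinv : ∀ k, ∀ x ∈ D, f k x ∈ D)
    (hf0 : ∀ k, f k 0 = 0)
    (hD₀open : IsOpen D₀) (h0D₀ : (0 : EuclideanSpace ℝ (Fin n)) ∈ D₀)
    (hD₀sub : D₀ ⊆ D)
    -- the Jacobian of `f k` on `D₀` is the matrix `A k x`
    (hJ : ∀ k, ∀ x ∈ D₀,
      HasFDerivAt (f k) (Matrix.toEuclideanCLM (𝕜 := ℝ) (A k x)) x)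
    (hAbar : 0 < Abar) (hLJ : 0 < LJ)
    (hJbound : ∀ k, ∀ x ∈ D₀,
      ‖Matrix.toEuclideanCLM (𝕜 := ℝ) (A k x)‖ ≤ Abar)
    (hJLip : ∀ k, ∀ x ∈ D₀, ∀ y ∈ D₀,
      ‖Matrix.toEuclideanCLM (𝕜 := ℝ) (A k x)
        - Matrix.toEuclideanCLM (𝕜 := ℝ) (A k y)‖ ≤ LJ * ‖x - y‖)
    (hPsymm : ∀ k, (P k).IsSymm)
    (hp : 0 < p) (hpP : p ≤ Pbar)
    (hPlow : ∀ k, (P k - p • (1 : Matrix (Fin n) (Fin n) ℝ)).PosSemidef)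
    (hPhigh : ∀ k, (Pbar • (1 : Matrix (Fin n) (Fin n) ℝ) - P k).PosSemidef)
    (hρ : 0 < ρ ∧ ρ < 1)
    -- Demidovich condition: (∂f/∂x)ᵀ P(k+1) (∂f/∂x) − ρ² P(k) ≺ 0 on D₀
    (hDemi : ∀ k, ∀ x ∈ D₀,
      ((ρ ^ 2) • P k - (A k x)ᵀ * P (k + 1) * A k x).PosDef) :
    ∃ r : ℝ, 0 < r ∧ Metric.closedBall (0 : EuclideanSpace ℝ (Fin n)) r ⊆ D₀ ∧
      ∃ d' : ℝ, 0 < d' ∧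
        ∀ (k₀ : ℕ) (x y : ℕ → EuclideanSpace ℝ (Fin n)),
          x k₀ ∈ Metric.closedBall (0 : EuclideanSpace ℝ (Fin n)) r →
          y k₀ ∈ Metric.closedBall (0 : EuclideanSpace ℝ (Fin n)) r →
          (∀ k, k₀ ≤ k → x (k + 1) = f k (x k)) →
          (∀ k, k₀ ≤ k → y (k + 1) = f k (y k)) →
          (∀ k, k₀ ≤ k → x k ∈ D₀ ∧ y k ∈ D₀) ∧
          (∀ k, k₀ ≤ k → ‖x k - y k‖ ≤ d' * ρ ^ (k - k₀) * ‖x k₀ - y k₀‖) := by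
  obtain ⟨hρ0, hρ1⟩ := hρ
  have hPbar : 0 < Pbar := lt_of_lt_of_le hp hpP
  -- P k is positive definite
  have hPd : ∀ k, (P k).PosDef := by
    intro k
    have h1 : (p • (1 : Matrix (Fin n) (Fin n) ℝ)).PosDef := by
      rw [Matrix.smul_one_eq_diagonal]
      exact Matrix.PosDef.diagonal fun _ => hp
    have := Matrix.PosDef.posSemidef_add (hPlow k) h1
    rwa [sub_add_cancel] at this
  -- Demidovich condition, quadratic-form version
  have hQ : ∀ k, ∀ x ∈ D₀, ∀ v : Fin n → ℝ,
      (A k x *ᵥ v) ⬝ᵥ (P (k + 1) *ᵥ (A k x *ᵥ v)) ≤ ρ ^ 2 * (v ⬝ᵥ (P k *ᵥ v)) := by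
    intro k x hx v
    have h := (hDemi k x hx).posSemidef.dotProduct_mulVec_nonneg v
    simp only [star_trivial, Matrix.sub_mulVec, dotProduct_sub, Matrix.smul_mulVec,
      dotProduct_smul, smul_eq_mul] at h
    have e : v ⬝ᵥ (((A k x)ᵀ * P (k + 1) * A k x) *ᵥ v) =
        (A k x *ᵥ v) ⬝ᵥ (P (k + 1) *ᵥ (A k x *ᵥ v)) := by
      rw [Matrix.mul_assoc, ← Matrix.mulVec_mulVec, Matrix.dotProduct_mulVec,
        Matrix.vecMul_transpose, ← Matrix.mulVec_mulVec]
    linarith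
  -- weighted norms
  have hsp : (0 : ℝ) < Real.sqrt p := Real.sqrt_pos.mpr hp
  have hsP : (0 : ℝ) < Real.sqrt Pbar := Real.sqrt_pos.mpr hPbar
  have hspP : Real.sqrt p ≤ Real.sqrt Pbar := Real.sqrt_le_sqrt hpP
  have hL : ∀ k (u : EuclideanSpace ℝ (Fin n)),
      Real.sqrt p * ‖u‖ ≤ ‖Matrix.toEuclideanCLM (𝕜 := ℝ) (hPd k).posSemidef.sqrt u‖ :=
    fun k u => weighted_low n (hPd k) hp.le (hPlow k) u
  have hH : ∀ k (u : EuclideanSpace ℝ (Fin n)),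
      ‖Matrix.toEuclideanCLM (𝕜 := ℝ) (hPd k).posSemidef.sqrt u‖ ≤ Real.sqrt Pbar * ‖u‖ :=
    fun k u => weighted_high n (hPd k) hPbar.le (hPhigh k) u
  -- choice of radii
  obtain ⟨ε, hε, hball⟩ := Metric.isOpen_iff.mp hD₀open 0 h0D₀
  set r₂ : ℝ := ε / 2 with hr₂def
  have hr₂ : 0 < r₂ := by positivity
  have hr₂sub : Metric.closedBall (0 : EuclideanSpace ℝ (Fin n)) r₂ ⊆ D₀ :=
    (Metric.closedBall_subset_ball (by simp [hr₂def]; linarith)).trans hball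
  set c : ℝ := Real.sqrt Pbar / Real.sqrt p with hcdef
  have hc0 : 0 < c := div_pos hsP hsp
  have hc1 : 1 ≤ c := (one_le_div hsp).mpr hspP
  set r : ℝ := r₂ / c with hrdef
  have hr : 0 < r := div_pos hr₂ hc0
  have hcr : c * r = r₂ := by
    rw [hrdef]; field_simp
  refine ⟨r, hr, ?_, c, hc0, ?_⟩
  · exact (Metric.closedBall_subset_closedBall (div_le_self hr₂.le hc1)).trans hr₂sub
  intro k₀ x y hx0 hy0 hxs hys
  rw [Metric.mem_closedBall, dist_zero_right] at hx0 hy0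
  -- membership helper
  have mem_aux : ∀ (k : ℕ) (z : EuclideanSpace ℝ (Fin n)),
      ‖Matrix.toEuclideanCLM (𝕜 := ℝ) (hPd k).posSemidef.sqrt z‖ ≤ Real.sqrt Pbar * r →
      z ∈ Metric.closedBall (0 : EuclideanSpace ℝ (Fin n)) r₂ := by
    intro k z hz
    rw [Metric.mem_closedBall, dist_zero_right]
    have h1 : Real.sqrt p * ‖z‖ ≤ Real.sqrt Pbar * r := le_trans (hL k z) hz
    have h2 : ‖z‖ ≤ (Real.sqrt Pbar * r) / Real.sqrt p := by
      rw [le_div_iff₀ hsp]; linarith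
    have h3 : (Real.sqrt Pbar * r) / Real.sqrt p = c * r := by rw [hcdef]; ring
    rw [h3, hcr] at h2
    exact h2
  have m0 : (0 : EuclideanSpace ℝ (Fin n)) ∈ Metric.closedBall
      (0 : EuclideanSpace ℝ (Fin n)) r₂ := by
    simp [hr₂.le]
  -- one-step contraction on the closed ball
  have hstep : ∀ (k : ℕ) (a b : EuclideanSpace ℝ (Fin n)),
      a ∈ Metric.closedBall (0 : EuclideanSpace ℝ (Fin n)) r₂ →
      b ∈ Metric.closedBall (0 : EuclideanSpace ℝ (Fin n)) r₂ →
      ‖Matrix.toEuclideanCLM (𝕜 := ℝ) (hPd (k + 1)).posSemidef.sqrt (f k a - f k b)‖ ≤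
        ρ * ‖Matrix.toEuclideanCLM (𝕜 := ℝ) (hPd k).posSemidef.sqrt (a - b)‖ := by
    intro k a b ha hb
    exact step_contraction n D₀ (f k) (A k) (P k) (P (k + 1)) (hPd k) (hPd (k + 1)) ρ hρ0.le
      (hJ k) (hQ k) _ (convex_closedBall _ _) hr₂sub a b ha hb
  -- main induction
  have H : ∀ k, k₀ ≤ k →
      ‖Matrix.toEuclideanCLM (𝕜 := ℝ) (hPd k).posSemidef.sqrt (x k)‖ ≤ Real.sqrt Pbar * r ∧
      ‖Matrix.toEuclideanCLM (𝕜 := ℝ) (hPd k).posSemidef.sqrt (y k)‖ ≤ Real.sqrt Pbar * r ∧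
      ‖Matrix.toEuclideanCLM (𝕜 := ℝ) (hPd k).posSemidef.sqrt (x k - y k)‖ ≤
        ρ ^ (k - k₀) *
          ‖Matrix.toEuclideanCLM (𝕜 := ℝ) (hPd k₀).posSemidef.sqrt (x k₀ - y k₀)‖ := by
    intro k hk
    induction k, hk using Nat.le_induction with
    | base =>
      refine ⟨(hH k₀ (x k₀)).trans ?_, (hH k₀ (y k₀)).trans ?_, ?_⟩
      · exact mul_le_mul_of_nonneg_left hx0 hsP.le
      · exact mul_le_mul_of_nonneg_left hy0 hsP.le
      · rw [Nat.sub_self, pow_zero, one_mul]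
    | succ k hk IH =>
      obtain ⟨ihx, ihy, ihd⟩ := IH
      have mx : x k ∈ Metric.closedBall (0 : EuclideanSpace ℝ (Fin n)) r₂ := mem_aux k _ ihx
      have my : y k ∈ Metric.closedBall (0 : EuclideanSpace ℝ (Fin n)) r₂ := mem_aux k _ ihy
      have hxk := hxs k hk
      have hyk := hys k hk
      have hB0 : 0 ≤ Real.sqrt Pbar * r := by positivity
      constructor
      · have h1 := hstep k (x k) 0 mx m0
        rw [hf0 k, sub_zero, sub_zero] at h1
        rw [hxk]
        calc ‖Matrix.toEuclideanCLM (𝕜 := ℝ) (hPd (k + 1)).posSemidef.sqrt (f k (x k))‖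
            ≤ ρ * ‖Matrix.toEuclideanCLM (𝕜 := ℝ) (hPd k).posSemidef.sqrt (x k)‖ := h1
          _ ≤ ρ * (Real.sqrt Pbar * r) := mul_le_mul_of_nonneg_left ihx hρ0.le
          _ ≤ 1 * (Real.sqrt Pbar * r) := mul_le_mul_of_nonneg_right hρ1.le hB0
          _ = Real.sqrt Pbar * r := one_mul _
      constructor
      · have h1 := hstep k (y k) 0 my m0
        rw [hf0 k, sub_zero, sub_zero] at h1
        rw [hyk]
        calc ‖Matrix.toEuclideanCLM (𝕜 := ℝ) (hPd (k + 1)).posSemidef.sqrt (f k (y k))‖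
            ≤ ρ * ‖Matrix.toEuclideanCLM (𝕜 := ℝ) (hPd k).posSemidef.sqrt (y k)‖ := h1
          _ ≤ ρ * (Real.sqrt Pbar * r) := mul_le_mul_of_nonneg_left ihy hρ0.le
          _ ≤ 1 * (Real.sqrt Pbar * r) := mul_le_mul_of_nonneg_right hρ1.le hB0
          _ = Real.sqrt Pbar * r := one_mul _
      · have h1 := hstep k (x k) (y k) mx my
        rw [hxk, hyk]
        have hsub' : (k + 1) - k₀ = (k - k₀) + 1 := by omega
        rw [hsub', pow_succ]
        calc ‖Matrix.toEuclideanCLM (𝕜 := ℝ) (hPd (k + 1)).posSemidef.sqrt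
              (f k (x k) - f k (y k))‖
            ≤ ρ * ‖Matrix.toEuclideanCLM (𝕜 := ℝ) (hPd k).posSemidef.sqrt (x k - y k)‖ := h1
          _ ≤ ρ * (ρ ^ (k - k₀) *
              ‖Matrix.toEuclideanCLM (𝕜 := ℝ) (hPd k₀).posSemidef.sqrt (x k₀ - y k₀)‖) :=
              mul_le_mul_of_nonneg_left ihd hρ0.le
          _ = ρ ^ (k - k₀) * ρ *
              ‖Matrix.toEuclideanCLM (𝕜 := ℝ) (hPd k₀).posSemidef.sqrt (x k₀ - y k₀)‖ := by
              ring
  constructor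
  · intro k hk
    obtain ⟨hx1, hy1, _⟩ := H k hk
    exact ⟨hr₂sub (mem_aux k _ hx1), hr₂sub (mem_aux k _ hy1)⟩
  · intro k hk
    obtain ⟨_, _, hd⟩ := H k hk
    have h1 : Real.sqrt p * ‖x k - y k‖ ≤
        ρ ^ (k - k₀) * (Real.sqrt Pbar * ‖x k₀ - y k₀‖) := by
      refine le_trans (hL k _) (le_trans hd ?_)
      exact mul_le_mul_of_nonneg_left (hH k₀ _) (pow_nonneg hρ0.le _)
    have h2 : ‖x k - y k‖ ≤ (ρ ^ (k - k₀) * (Real.sqrt Pbar * ‖x k₀ - y k₀‖)) / Real.sqrt p := by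
      rw [le_div_iff₀ hsp]; linarith
    have h3 : (ρ ^ (k - k₀) * (Real.sqrt Pbar * ‖x k₀ - y k₀‖)) / Real.sqrt p =
        c * ρ ^ (k - k₀) * ‖x k₀ - y k₀‖ := by
      rw [hcdef]; ring
    rwa [h3] at h2
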